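/- Let θ ∈ (0, π/4] and set c* = 1/(cos θ + sin θ)². On the domain D = (0, c*] × (0, 2], define ρ₁(c, λ) = 1 − λ(1 − c) and ρ₂(c, λ) = (1/2)·(λ·c·cos(2θ) − λ + 2 + λ·√(c²·cos²(2θ) − 2c + 1)). Then the minimum over (c, λ) ∈ D of max{|ρ₁(c, λ)|, |ρ₂(c, λ)|} equals c*·cos(2θ), and it is attained at (c, λ) = (c*, 2). -/

import Mathlib

open Real

lemma aux14 (s t c lam : ℝ) (hs0 : 0 ≤ s) (ht0 : 0 < t)
    (hst : s ^ 2 + t ^ 2 = 1) (hc0 : 0 < c) (hc1 : c ≤ 1 / (1 + t))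
    (hl0 : 0 < lam) (hl2 : lam ≤ 2) :
    1 / (1 + t) * s ≤ 1 / 2 * (lam * c * s - lam + 2
      + lam * Real.sqrt (c ^ 2 * s ^ 2 - 2 * c + 1)) := by
  have ht1 : (0:ℝ) < 1 + t := by linarith
  have hs1 : s ≤ 1 := by nlinarith
  have hca : c * (1 + t) ≤ 1 := (le_div_iff₀ ht1).mp hc1
  have ha : 0 ≤ 1 - c * (1 + t) := by linarith
  have hΔ : c ^ 2 * s ^ 2 - 2 * c + 1 = (1 - c * (1 + t)) * (1 - c + c * t) := by
    linear_combination c ^ 2 * hst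
  have hcle1 : c ≤ 1 := by nlinarith
  have hΔ0 : 0 ≤ c ^ 2 * s ^ 2 - 2 * c + 1 := by
    rw [hΔ]; apply mul_nonneg ha; nlinarith
  set r := Real.sqrt (c ^ 2 * s ^ 2 - 2 * c + 1) with hr
  have hr0 : 0 ≤ r := Real.sqrt_nonneg _
  have hr2 : r ^ 2 = c ^ 2 * s ^ 2 - 2 * c + 1 := Real.sq_sqrt hΔ0
  have hcs1 : c * s ≤ 1 := by nlinarith
  have hub : r ≤ 1 - c * s := by
    have h := Real.sqrt_le_sqrt (show c ^ 2 * s ^ 2 - 2 * c + 1 ≤ (1 - c * s) ^ 2 by nlinarith)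
    rwa [Real.sqrt_sq (by linarith : 0 ≤ 1 - c * s)] at h
  have hlb : s * (1 - c * (1 + t)) / (1 + t) ≤ r := by
    have h := Real.sqrt_le_sqrt (show (s * (1 - c * (1 + t)) / (1 + t)) ^ 2 ≤ c ^ 2 * s ^ 2 - 2 * c + 1 by
      rw [div_pow, div_le_iff₀ (by positivity)]
      nlinarith [mul_nonneg (mul_nonneg ht0.le ha) ht1.le, sq_nonneg (1 - c * (1 + t)), mul_nonneg ha ht0.le])
    rwa [Real.sqrt_sq (by positivity)] at h
  have hkey : c * s + s * (1 - c * (1 + t)) / (1 + t) = 1 / (1 + t) * s := by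
    field_simp; ring
  have h1 : 1 / (1 + t) * s ≤ c * s + r := by linarith
  have hA : 0 ≤ (2 - lam) * (1 - c * s - r) :=
    mul_nonneg (by linarith) (by linarith)
  nlinarith [hA, h1]

/-- For `θ ∈ (0, π/4]` and `c* = 1/(cos θ + sin θ)²`, the minimum of
`max{|ρ₁(c,λ)|, |ρ₂(c,λ)|}` over `(c, λ) ∈ (0, c*] × (0, 2]` equals
`c* cos 2θ`, attained at `(c, λ) = (c*, 2)`. -/
theorem stmt14 (θ : ℝ) (hθ : θ ∈ Set.Ioc 0 (π / 4))
    (cstar : ℝ) (hcstar : cstar = 1 / (cos θ + sin θ) ^ 2)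
    (rho1 rho2 : ℝ → ℝ → ℝ)
    (hrho1 : rho1 = fun c lam => 1 - lam * (1 - c))
    (hrho2 : rho2 = fun c lam =>
      (1 / 2) * (lam * c * cos (2 * θ) - lam + 2
        + lam * Real.sqrt (c ^ 2 * cos (2 * θ) ^ 2 - 2 * c + 1))) :
    (∀ c lam : ℝ, c ∈ Set.Ioc (0 : ℝ) cstar → lam ∈ Set.Ioc (0 : ℝ) 2 →
      cstar * cos (2 * θ) ≤ max |rho1 c lam| |rho2 c lam|) ∧
    max |rho1 cstar 2| |rho2 cstar 2| = cstar * cos (2 * θ) := by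
  obtain ⟨hθ0, hθ1⟩ := hθ
  have hpi : (0:ℝ) < π := Real.pi_pos
  have ht0 : 0 < sin (2 * θ) := Real.sin_pos_of_pos_of_lt_pi (by linarith) (by linarith)
  have ht1 : sin (2 * θ) ≤ 1 := Real.sin_le_one _
  have hs0 : 0 ≤ cos (2 * θ) := Real.cos_nonneg_of_mem_Icc ⟨by linarith, by linarith⟩
  have hst : cos (2 * θ) ^ 2 + sin (2 * θ) ^ 2 = 1 := by
    have := Real.sin_sq_add_cos_sq (2 * θ); linarith
  have h1t : (0:ℝ) < 1 + sin (2 * θ) := by linarith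
  have hcs : cstar = 1 / (1 + sin (2 * θ)) := by
    rw [hcstar]
    congr 1
    have h1 := Real.sin_sq_add_cos_sq θ
    have h2 : sin (2 * θ) = 2 * sin θ * cos θ := Real.sin_two_mul θ
    linear_combination h1 - h2
  have hsum : 1 ≤ cos (2 * θ) + sin (2 * θ) := by nlinarith
  have hc0 : 0 < cstar := by rw [hcs]; positivity
  constructor
  · intro c lam ⟨hcl, hcu⟩ ⟨hll, hlu⟩
    subst hrho1 hrho2
    simp only
    refine le_trans ?_ (le_trans (le_abs_self _) (le_max_right _ _))
    rw [hcs]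
    exact aux14 (cos (2 * θ)) (sin (2 * θ)) c lam hs0 ht0 hst hcl (hcs ▸ hcu) hll hlu
  · subst hrho1 hrho2
    simp only
    have hΔ : cstar ^ 2 * cos (2 * θ) ^ 2 - 2 * cstar + 1 = 0 := by
      rw [hcs]
      field_simp
      linear_combination hst
    rw [hΔ, Real.sqrt_zero]
    have hx : cstar * (1 + sin (2 * θ)) = 1 := by rw [hcs]; field_simp
    have hrho1v : |1 - 2 * (1 - cstar)| = 2 * cstar - 1 := by
      rw [abs_of_nonneg]
      · ring
      · nlinarith
    have hrho2v : (1:ℝ) / 2 * (2 * cstar * cos (2 * θ) - 2 + 2 + 2 * 0)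
        = cstar * cos (2 * θ) := by ring
    rw [hrho2v, hrho1v, abs_of_nonneg (by positivity : (0:ℝ) ≤ cstar * cos (2 * θ))]
    apply max_eq_right
    nlinarith [mul_pos hc0 ht0]
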